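/- Let f: ℝⁿ → ℝⁿ be an L-bi-Lipschitz map with respect to the Euclidean metric satisfying f(0) = 0, extended to the one-point compactification by f(∞) = ∞. Then the extension is L³-bi-Lipschitz with respect to the chordal metric. -/

import Mathlib

/-- The chordal metric on `ℝⁿ ∪ {∞}`, with `∞` modelled by `none`. -/
noncomputable def chordal {n : ℕ} (x y : Option (EuclideanSpace ℝ (Fin n))) : ℝ :=
  match x, y with
  | some a, some b => ‖a - b‖ / (Real.sqrt (1 + ‖a‖ ^ 2) * Real.sqrt (1 + ‖b‖ ^ 2))
  | some a, none => 1 / Real.sqrt (1 + ‖a‖ ^ 2)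
  | none, some b => 1 / Real.sqrt (1 + ‖b‖ ^ 2)
  | none, none => 0

lemma sqrt_bd {L s t : ℝ} (hL : 1 ≤ L) (hs : 0 ≤ s) (hst : s ≤ L * t) :
    Real.sqrt (1 + s ^ 2) ≤ L * Real.sqrt (1 + t ^ 2) := by
  have hL0 : (0:ℝ) ≤ L := by linarith
  have h1 : Real.sqrt (1 + s ^ 2) ≤ Real.sqrt (L ^ 2 * (1 + t ^ 2)) := by
    apply Real.sqrt_le_sqrt
    nlinarith [sq_nonneg s, sq_nonneg (L * t - s)]
  rwa [Real.sqrt_mul (sq_nonneg L), Real.sqrt_sq hL0] at h1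

/-- An `L`-bi-Lipschitz homeomorphism of `ℝⁿ` (Euclidean metric) fixing `0`, extended
by `f(∞) = ∞`, is `L³`-bi-Lipschitz with respect to the chordal metric. -/
theorem stmt3 (n : ℕ) (L : ℝ) (hL : 1 ≤ L)
    (f : EuclideanSpace ℝ (Fin n) → EuclideanSpace ℝ (Fin n))
    (hbij : Function.Bijective f) (hf0 : f 0 = 0)
    (hlip : ∀ x y, ‖x - y‖ / L ≤ ‖f x - f y‖ ∧ ‖f x - f y‖ ≤ L * ‖x - y‖) :
    ∀ x y : Option (EuclideanSpace ℝ (Fin n)),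
      chordal x y / L ^ 3 ≤ chordal (Option.map f x) (Option.map f y) ∧
      chordal (Option.map f x) (Option.map f y) ≤ L ^ 3 * chordal x y := by
  have hL0 : (0:ℝ) < L := lt_of_lt_of_le one_pos hL
  have hLL : L ≤ L ^ 3 := by nlinarith [mul_nonneg (sub_nonneg.2 hL) (sq_nonneg L), mul_nonneg (sub_nonneg.2 hL) hL0.le]
  have Dpos : ∀ a : EuclideanSpace ℝ (Fin n), 0 < Real.sqrt (1 + ‖a‖ ^ 2) := fun a =>
    Real.sqrt_pos.2 (by positivity)
  have hfu : ∀ a, ‖f a‖ ≤ L * ‖a‖ := fun a => by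
    have := (hlip a 0).2; simpa [hf0] using this
  have hfl : ∀ a, ‖a‖ ≤ L * ‖f a‖ := fun a => by
    have h := (hlip a 0).1
    rw [div_le_iff₀ hL0] at h
    simp only [hf0, sub_zero] at h
    linarith
  have Dup : ∀ a, Real.sqrt (1 + ‖f a‖ ^ 2) ≤ L * Real.sqrt (1 + ‖a‖ ^ 2) :=
    fun a => sqrt_bd hL (norm_nonneg _) (hfu a)
  have Ddown : ∀ a, Real.sqrt (1 + ‖a‖ ^ 2) ≤ L * Real.sqrt (1 + ‖f a‖ ^ 2) :=
    fun a => sqrt_bd hL (norm_nonneg _) (hfl a)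
  rintro (_|a) (_|b)
  · simp [chordal]
  · simp only [Option.map_none, Option.map_some, chordal]
    constructor
    · rw [div_div, div_le_div_iff₀ (by positivity) (Dpos _)]
      have h1 := Dup b
      have h2 := mul_le_mul_of_nonneg_right hLL (Dpos b).le
      nlinarith [Dpos b, Dpos (f b)]
    · rw [mul_one_div, div_le_div_iff₀ (Dpos _) (Dpos _)]
      have h1 := Ddown b
      have h2 := mul_le_mul_of_nonneg_right hLL (Dpos (f b)).le
      nlinarith
  · simp only [Option.map_none, Option.map_some, chordal]
    constructor
    · rw [div_div, div_le_div_iff₀ (by positivity) (Dpos _)]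
      have h1 := Dup a
      have h2 := mul_le_mul_of_nonneg_right hLL (Dpos a).le
      nlinarith [Dpos a, Dpos (f a)]
    · rw [mul_one_div, div_le_div_iff₀ (Dpos _) (Dpos _)]
      have h1 := Ddown a
      have h2 := mul_le_mul_of_nonneg_right hLL (Dpos (f a)).le
      nlinarith
  · simp only [Option.map_some, chordal]
    have hab1 : ‖a - b‖ ≤ L * ‖f a - f b‖ := by
      have h := (hlip a b).1
      rw [div_le_iff₀ hL0] at h
      linarith
    have hab2 : ‖f a - f b‖ ≤ L * ‖a - b‖ := (hlip a b).2
    constructor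
    · rw [div_div, div_le_div_iff₀ (by positivity) (by positivity)]
      have key : ‖a - b‖ * (Real.sqrt (1 + ‖f a‖ ^ 2) * Real.sqrt (1 + ‖f b‖ ^ 2)) ≤
          (L * ‖f a - f b‖) * ((L * Real.sqrt (1 + ‖a‖ ^ 2)) * (L * Real.sqrt (1 + ‖b‖ ^ 2))) := by
        exact mul_le_mul hab1 (mul_le_mul (Dup a) (Dup b) (by positivity) (by positivity))
          (by positivity) (by positivity)
      refine le_trans key (le_of_eq (by ring))
    · rw [mul_div_assoc', div_le_div_iff₀ (by positivity) (by positivity)]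
      have key : ‖f a - f b‖ * (Real.sqrt (1 + ‖a‖ ^ 2) * Real.sqrt (1 + ‖b‖ ^ 2)) ≤
          (L * ‖a - b‖) * ((L * Real.sqrt (1 + ‖f a‖ ^ 2)) * (L * Real.sqrt (1 + ‖f b‖ ^ 2))) := by
        exact mul_le_mul hab2 (mul_le_mul (Ddown a) (Ddown b) (by positivity) (by positivity))
          (by positivity) (by positivity)
      refine le_trans key (le_of_eq (by ring))
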